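/- For every τ with 0 < τ ≤ 2 and every η > 0, one has Q̂(τ,η) := exp(−2τη) + (1/η)·(exp(−τη) − 1)² ≤ 1. (This is the stability of the semidiscrete ETD-RK1 scheme, continuous in space and discrete in time, for the dimensionless advection–diffusion equation: the squared modulus of its Fourier-space growth factor is at most 1 for every spatial frequency.) -/

import Mathlib

lemma etdrk1_key (x : ℝ) (hx : 0 ≤ x) : 2 - x ≤ (2 + x) * Real.exp (-x) := by
  have hd : ∀ y : ℝ, HasDerivAt (fun t : ℝ => (2 + t) * Real.exp (-t) + t)
      (1 - (1 + y) * Real.exp (-y)) y := by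
    intro y
    have h1 : HasDerivAt (fun t : ℝ => (2 + t)) 1 y := by
      simpa using (hasDerivAt_id y).const_add 2
    have h2 : HasDerivAt (fun t : ℝ => Real.exp (-t)) (-Real.exp (-y)) y := by
      simpa [Function.comp_def] using (Real.hasDerivAt_exp (-y)).comp y (hasDerivAt_neg y)
    have := (h1.mul h2).add (hasDerivAt_id y)
    exact this.congr_deriv (by ring)
  have hmono : MonotoneOn (fun t : ℝ => (2 + t) * Real.exp (-t) + t) (Set.Ici 0) := by
    apply monotoneOn_of_deriv_nonneg (convex_Ici 0)
    · exact Continuous.continuousOn (by continuity)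
    · intro y hy
      exact ((hd y).differentiableAt).differentiableWithinAt
    · intro y hy
      rw [(hd y).deriv]
      have h3 : (1 + y) * Real.exp (-y) ≤ 1 := by
        have h1 := Real.add_one_le_exp y
        have hpos := Real.exp_pos (-y)
        have hprod : Real.exp y * Real.exp (-y) = 1 := by
          rw [← Real.exp_add]; simp
        nlinarith
      linarith
  have h0 : (fun t : ℝ => (2 + t) * Real.exp (-t) + t) 0 ≤
      (fun t : ℝ => (2 + t) * Real.exp (-t) + t) x :=
    hmono (Set.self_mem_Ici) hx hx
  simp only [neg_zero, Real.exp_zero] at h0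
  linarith

/-- Stability of the semidiscrete ETD-RK1 scheme for the dimensionless
advection–diffusion equation: for `0 < τ ≤ 2` and every `η > 0`,
`Q̂(τ,η) = exp(−2τη) + (1/η)·(exp(−τη) − 1)² ≤ 1`. -/
theorem etdrk1_semidiscrete_stability
    (τ η : ℝ) (hτ0 : 0 < τ) (hτ2 : τ ≤ 2) (hη : 0 < η) :
    Real.exp (-2 * τ * η) + (1 / η) * (Real.exp (-τ * η) - 1) ^ 2 ≤ 1 := by
  set x := τ * η with hxdef
  have hx : 0 < x := mul_pos hτ0 hη
  have hkey := etdrk1_key x hx.le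
  set s := 1 - Real.exp (-x) with hsdef
  have hs0 : 0 ≤ s := by
    have : Real.exp (-x) ≤ 1 := Real.exp_le_one_iff.mpr (by linarith)
    simp [hsdef]; linarith
  have h2x : Real.exp (-2 * τ * η) = (1 - s) ^ 2 := by
    have : (-2 : ℝ) * τ * η = (-x) + (-x) := by rw [hxdef]; ring
    rw [this, Real.exp_add, hsdef]; ring
  have hsq : (Real.exp (-τ * η) - 1) ^ 2 = s ^ 2 := by
    rw [hsdef, hxdef]; ring_nf
  rw [h2x, hsq]
  -- from key: s * (2 + x) ≤ 2 * x
  have hkey2 : s * (2 + x) ≤ 2 * x := by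
    have : (2 + x) * Real.exp (-x) = (2 + x) * (1 - s) := by rw [hsdef]; ring
    nlinarith
  -- so (2/x) * s^2 ≤ 2*s - s^2, and 1/η = τ/x ≤ 2/x
  have hinv : (1 / η) = τ / x := by
    field_simp [hxdef]
    rw [hxdef]; ring
  rw [hinv]
  have hτx : τ / x * s ^ 2 ≤ 2 / x * s ^ 2 := by
    apply mul_le_mul_of_nonneg_right _ (sq_nonneg s)
    gcongr
  have h2s : 2 / x * s ^ 2 ≤ 2 * s - s ^ 2 := by
    rw [div_mul_eq_mul_div, div_le_iff₀ hx]
    nlinarith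
  nlinarith
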